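/- Let k ≥ 2, let P ⊆ ℝ³ be a nonempty bounded open set, and let v : ℝ³ → ℝ be continuously differentiable. Then there exists a unique polynomial function p : ℝ³ → ℝ of total degree at most k such that ∫_P ∇(v − p)(x)·∇q(x) dx = 0 for every polynomial function q of total degree at most k, and ∫_P (v(x) − p(x)) dx = 0 (integrals with respect to Lebesgue measure). -/

import Mathlib

open MeasureTheory
open scoped RealInnerProductSpace

noncomputable section EPAux

/-- polynomial function associated to a multivariate polynomial -/
def epPF (p : MvPolynomial (Fin 3) ℝ) : EuclideanSpace ℝ (Fin 3) → ℝ :=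
  fun y => MvPolynomial.eval (fun i => y i) p

lemma epPF_analytic (p : MvPolynomial (Fin 3) ℝ) :
    AnalyticOnNhd ℝ (epPF p) Set.univ := by
  induction p using MvPolynomial.induction_on with
  | C a =>
      have h : epPF (MvPolynomial.C a) = fun _ => a := by
        funext y; simp [epPF]
      rw [h]; exact analyticOnNhd_const
  | add p q hp hq =>
      have h : epPF (p + q) = fun y => epPF p y + epPF q y := by
        funext y; simp [epPF]
      rw [h]; exact hp.add hq
  | mul_X p i hp =>
      have h : epPF (p * MvPolynomial.X i) = fun y => epPF p y * y i := by
        funext y; simp [epPF]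
      rw [h]
      exact hp.mul ((EuclideanSpace.proj (𝕜 := ℝ) i).analyticOnNhd Set.univ)

lemma epPF_diff (p : MvPolynomial (Fin 3) ℝ) : Differentiable ℝ (epPF p) :=
  fun x => ((epPF_analytic p) x trivial).differentiableAt

lemma epPF_cont (p : MvPolynomial (Fin 3) ℝ) : Continuous (epPF p) :=
  (epPF_diff p).continuous

lemma epPF_grad_cont (p : MvPolynomial (Fin 3) ℝ) :
    Continuous (fun x => gradient (epPF p) x) := by
  have h1 : Continuous (fderiv ℝ (epPF p)) := by
    rw [← continuousOn_univ]
    exact ((epPF_analytic p).fderiv).continuousOn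
  unfold gradient
  exact (InnerProductSpace.toDual ℝ _).symm.continuous.comp h1

lemma gradient_fun_sub {f g : EuclideanSpace ℝ (Fin 3) → ℝ} {x : EuclideanSpace ℝ (Fin 3)}
    (hf : DifferentiableAt ℝ f x) (hg : DifferentiableAt ℝ g x) :
    gradient (fun y => f y - g y) x = gradient f x - gradient g x := by
  unfold gradient
  rw [fderiv_fun_sub hf hg, map_sub]

lemma gradient_fun_add {f g : EuclideanSpace ℝ (Fin 3) → ℝ} {x : EuclideanSpace ℝ (Fin 3)}
    (hf : DifferentiableAt ℝ f x) (hg : DifferentiableAt ℝ g x) :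
    gradient (fun y => f y + g y) x = gradient f x + gradient g x := by
  unfold gradient
  rw [fderiv_fun_add hf hg, map_add]

lemma gradient_fun_smul {f : EuclideanSpace ℝ (Fin 3) → ℝ} {x : EuclideanSpace ℝ (Fin 3)}
    (c : ℝ) (hf : DifferentiableAt ℝ f x) :
    gradient (fun y => c * f y) x = c • gradient f x := by
  unfold gradient
  rw [fderiv_const_mul hf c]
  exact (InnerProductSpace.toDual ℝ (EuclideanSpace ℝ (Fin 3))).symm.map_smul c (fderiv ℝ f x)

lemma epPF_add (p q : MvPolynomial (Fin 3) ℝ) :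
    epPF (p + q) = fun y => epPF p y + epPF q y := by
  funext y; simp [epPF]

lemma epPF_smul (c : ℝ) (p : MvPolynomial (Fin 3) ℝ) :
    epPF (c • p) = fun y => c * epPF p y := by
  funext y; simp [epPF]

lemma epPF_one : epPF 1 = fun _ => (1 : ℝ) := by
  funext y; simp [epPF]

lemma epPF_grad_add (p q : MvPolynomial (Fin 3) ℝ) (x : EuclideanSpace ℝ (Fin 3)) :
    gradient (epPF (p + q)) x = gradient (epPF p) x + gradient (epPF q) x := by
  rw [epPF_add]
  exact gradient_fun_add (epPF_diff p x) (epPF_diff q x)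

lemma epPF_grad_smul (c : ℝ) (p : MvPolynomial (Fin 3) ℝ) (x : EuclideanSpace ℝ (Fin 3)) :
    gradient (epPF (c • p)) x = c • gradient (epPF p) x := by
  rw [epPF_smul]
  exact gradient_fun_smul c (epPF_diff p x)

lemma epPF_grad_one (x : EuclideanSpace ℝ (Fin 3)) : gradient (epPF 1) x = 0 := by
  rw [epPF_one]
  unfold gradient
  simp

/-- a polynomial whose function is zero is zero -/
lemma epPF_zero_poly {p : MvPolynomial (Fin 3) ℝ} (h : ∀ x, epPF p x = 0) : p = 0 := by
  apply MvPolynomial.funext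
  intro x
  have := h ((WithLp.equiv 2 (∀ _ : Fin 3, ℝ)).symm x)
  simpa [epPF] using this

end EPAux

set_option maxHeartbeats 2000000 in
/-- Let `k ≥ 2`, let `P ⊆ ℝ³` be a nonempty bounded open set, and let
`v : ℝ³ → ℝ` be continuously differentiable.  Then there is a unique polynomial function
`p` of total degree at most `k` such that `∫_P ∇(v − p)·∇q = 0` for every polynomial `q` of
total degree at most `k`, and `∫_P (v − p) = 0`.  (This is the well-posedness of the
elliptic projection `Π^∇_P` of the Virtual Element Method.) -/
theorem elliptic_projection_exists_unique
    (k : ℕ) (hk : 2 ≤ k)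
    (P : Set (EuclideanSpace ℝ (Fin 3)))
    (hPopen : IsOpen P) (hPne : P.Nonempty) (hPbdd : Bornology.IsBounded P)
    (v : EuclideanSpace ℝ (Fin 3) → ℝ) (hv : ContDiff ℝ 1 v) :
    ∃! p : MvPolynomial (Fin 3) ℝ, p.totalDegree ≤ k ∧
      (∀ q : MvPolynomial (Fin 3) ℝ, q.totalDegree ≤ k →
        ∫ x in P,
          ⟪gradient (fun y : EuclideanSpace ℝ (Fin 3) =>
              v y - MvPolynomial.eval (fun i => y i) p) x,
            gradient (fun y : EuclideanSpace ℝ (Fin 3) =>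
              MvPolynomial.eval (fun i => y i) q) x⟫ = 0) ∧
      ∫ x in P, (v x - MvPolynomial.eval (fun i => x i) p) = 0 := by
  classical
  have hPmeas : MeasurableSet P := hPopen.measurableSet
  have hPcc : IsCompact (closure P) := hPbdd.isCompact_closure
  have hInt : ∀ f : EuclideanSpace ℝ (Fin 3) → ℝ, Continuous f → IntegrableOn f P :=
    fun f hf => (hf.continuousOn.integrableOn_compact hPcc).mono_set subset_closure
  have hvdiff : Differentiable ℝ v := hv.differentiable one_ne_zero
  have hgradv_cont : Continuous (fun x => gradient v x) := by
    have h1 : Continuous (fderiv ℝ v) := hv.continuous_fderiv one_ne_zero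
    unfold gradient
    exact (InnerProductSpace.toDual ℝ _).symm.continuous.comp h1
  have hintAA : ∀ p q : MvPolynomial (Fin 3) ℝ,
      IntegrableOn (fun x => ⟪gradient (epPF p) x, gradient (epPF q) x⟫) P :=
    fun p q => hInt _ ((epPF_grad_cont p).inner (epPF_grad_cont q))
  have hintAv : ∀ q : MvPolynomial (Fin 3) ℝ,
      IntegrableOn (fun x => ⟪gradient v x, gradient (epPF q) x⟫) P :=
    fun q => hInt _ (hgradv_cont.inner (epPF_grad_cont q))
  have hintB : ∀ p : MvPolynomial (Fin 3) ℝ, IntegrableOn (epPF p) P :=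
    fun p => hInt _ (epPF_cont p)
  have hintv : IntegrableOn v P := hInt v hv.continuous
  -- the bilinear data
  set A : MvPolynomial (Fin 3) ℝ → MvPolynomial (Fin 3) ℝ → ℝ :=
    fun p q => ∫ x in P, ⟪gradient (epPF p) x, gradient (epPF q) x⟫ with hAdef
  set B : MvPolynomial (Fin 3) ℝ → ℝ := fun p => ∫ x in P, epPF p x with hBdef
  set Av : MvPolynomial (Fin 3) ℝ → ℝ :=
    fun q => ∫ x in P, ⟪gradient v x, gradient (epPF q) x⟫ with hAvdef
  set Bv : ℝ := ∫ x in P, v x with hBvdef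
  -- linearity facts
  have A_addl : ∀ p p' q : MvPolynomial (Fin 3) ℝ, A (p + p') q = A p q + A p' q := by
    intro p p' q
    have h : (fun x => ⟪gradient (epPF (p + p')) x, gradient (epPF q) x⟫)
        = fun x => ⟪gradient (epPF p) x, gradient (epPF q) x⟫
            + ⟪gradient (epPF p') x, gradient (epPF q) x⟫ := by
      funext x; rw [epPF_grad_add, inner_add_left]
    simp only [hAdef]
    rw [h, integral_add (hintAA p q) (hintAA p' q)]
  have A_smull : ∀ (c : ℝ) (p q : MvPolynomial (Fin 3) ℝ), A (c • p) q = c * A p q := by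
    intro c p q
    have h : (fun x => ⟪gradient (epPF (c • p)) x, gradient (epPF q) x⟫)
        = fun x => c * ⟪gradient (epPF p) x, gradient (epPF q) x⟫ := by
      funext x; rw [epPF_grad_smul, real_inner_smul_left]
    simp only [hAdef]
    rw [h]
    exact integral_const_mul c _
  have A_addr : ∀ p q q' : MvPolynomial (Fin 3) ℝ, A p (q + q') = A p q + A p q' := by
    intro p q q'
    have h : (fun x => ⟪gradient (epPF p) x, gradient (epPF (q + q')) x⟫)
        = fun x => ⟪gradient (epPF p) x, gradient (epPF q) x⟫
            + ⟪gradient (epPF p) x, gradient (epPF q') x⟫ := by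
      funext x; rw [epPF_grad_add, inner_add_right]
    simp only [hAdef]
    rw [h, integral_add (hintAA p q) (hintAA p q')]
  have A_smulr : ∀ (c : ℝ) (p q : MvPolynomial (Fin 3) ℝ), A p (c • q) = c * A p q := by
    intro c p q
    have h : (fun x => ⟪gradient (epPF p) x, gradient (epPF (c • q)) x⟫)
        = fun x => c * ⟪gradient (epPF p) x, gradient (epPF q) x⟫ := by
      funext x; rw [epPF_grad_smul, real_inner_smul_right]
    simp only [hAdef]
    rw [h]
    exact integral_const_mul c _
  have Av_add : ∀ q q' : MvPolynomial (Fin 3) ℝ, Av (q + q') = Av q + Av q' := by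
    intro q q'
    have h : (fun x => ⟪gradient v x, gradient (epPF (q + q')) x⟫)
        = fun x => ⟪gradient v x, gradient (epPF q) x⟫
            + ⟪gradient v x, gradient (epPF q') x⟫ := by
      funext x; rw [epPF_grad_add, inner_add_right]
    simp only [hAvdef]
    rw [h, integral_add (hintAv q) (hintAv q')]
  have Av_smul : ∀ (c : ℝ) (q : MvPolynomial (Fin 3) ℝ), Av (c • q) = c * Av q := by
    intro c q
    have h : (fun x => ⟪gradient v x, gradient (epPF (c • q)) x⟫)
        = fun x => c * ⟪gradient v x, gradient (epPF q) x⟫ := by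
      funext x; rw [epPF_grad_smul, real_inner_smul_right]
    simp only [hAvdef]
    rw [h]
    exact integral_const_mul c _
  have B_add : ∀ p q : MvPolynomial (Fin 3) ℝ, B (p + q) = B p + B q := by
    intro p q
    simp only [hBdef]
    rw [epPF_add, integral_add (hintB p) (hintB q)]
  have B_smul : ∀ (c : ℝ) (p : MvPolynomial (Fin 3) ℝ), B (c • p) = c * B p := by
    intro c p
    simp only [hBdef]
    rw [epPF_smul]
    exact integral_const_mul c _
  -- the finite-dimensional space
  set W := MvPolynomial.restrictTotalDegree (Fin 3) ℝ k with hWdef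
  have memW : ∀ p : MvPolynomial (Fin 3) ℝ, p ∈ W ↔ p.totalDegree ≤ k := fun p =>
    MvPolynomial.mem_restrictTotalDegree (Fin 3) (m := k) p
  -- the Gram operator
  let Φ : W →ₗ[ℝ] Module.Dual ℝ W :=
    { toFun := fun p =>
        { toFun := fun q => A p.1 q.1 + B p.1 * B q.1
          map_add' := by
            intro q r
            simp only [Submodule.coe_add]
            rw [A_addr, B_add]; ring
          map_smul' := by
            intro c q
            simp only [Submodule.coe_smul, RingHom.id_apply, smul_eq_mul]
            rw [A_smulr, B_smul]; ring }
      map_add' := by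
        intro p r
        apply LinearMap.ext
        intro q
        simp only [Submodule.coe_add, LinearMap.coe_mk, AddHom.coe_mk, LinearMap.add_apply]
        rw [A_addl, B_add]; ring
      map_smul' := by
        intro c p
        apply LinearMap.ext
        intro q
        simp only [Submodule.coe_smul, LinearMap.coe_mk, AddHom.coe_mk, RingHom.id_apply,
          LinearMap.smul_apply, smul_eq_mul]
        rw [A_smull, B_smul]; ring }
  have Φ_apply : ∀ (p q : W), Φ p q = A p.1 q.1 + B p.1 * B q.1 := fun p q => rfl
  -- the right-hand side functional
  let L₀ : Module.Dual ℝ W :=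
    { toFun := fun q => Av q.1 + Bv * B q.1
      map_add' := by
        intro q r
        simp only [Submodule.coe_add]
        rw [Av_add, B_add]; ring
      map_smul' := by
        intro c q
        simp only [Submodule.coe_smul, RingHom.id_apply, smul_eq_mul]
        rw [Av_smul, B_smul]; ring }
  have L₀_apply : ∀ q : W, L₀ q = Av q.1 + Bv * B q.1 := fun q => rfl
  -- volume facts
  have hvolpos : (0 : ℝ) < (volume P).toReal :=
    ENNReal.toReal_pos (hPopen.measure_pos volume hPne).ne'
      (lt_of_le_of_lt (measure_mono subset_closure) hPcc.measure_lt_top).ne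
  -- injectivity of Φ
  have hΦinj : Function.Injective Φ := by
    rw [← LinearMap.ker_eq_bot]
    rw [LinearMap.ker_eq_bot']
    intro w hw
    have h0 : A w.1 w.1 + B w.1 * B w.1 = 0 := by
      have h := congrArg (fun L : Module.Dual ℝ W => L w) hw
      simpa [Φ_apply] using h
    have hA0 : 0 ≤ A w.1 w.1 := by
      apply setIntegral_nonneg hPmeas
      intro x _
      exact real_inner_self_nonneg
    have hAzero : A w.1 w.1 = 0 := by nlinarith [mul_self_nonneg (B w.1)]
    have hBzero : B w.1 = 0 := by nlinarith [mul_self_nonneg (B w.1)]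
    have hae : (fun x => ⟪gradient (epPF w.1) x, gradient (epPF w.1) x⟫)
        =ᵐ[volume.restrict P] 0 :=
      (integral_eq_zero_iff_of_nonneg (fun x => real_inner_self_nonneg)
        (hintAA w.1 w.1)).mp hAzero
    have heqOn : Set.EqOn (fun x => ⟪gradient (epPF w.1) x, gradient (epPF w.1) x⟫) 0 P :=
      MeasureTheory.Measure.eqOn_of_ae_eq hae
        (((epPF_grad_cont w.1).inner (epPF_grad_cont w.1)).continuousOn)
        continuousOn_const
        (by rw [hPopen.interior_eq]; exact subset_closure)
    have hgrad0 : ∀ x ∈ P, gradient (epPF w.1) x = 0 := by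
      intro x hx
      exact inner_self_eq_zero.mp (heqOn hx)
    obtain ⟨z₀, hz₀⟩ := hPne
    have hfder0P : ∀ x ∈ P, fderiv ℝ (epPF w.1) x = 0 := by
      intro x hx
      have h := hgrad0 x hx
      unfold gradient at h
      rwa [LinearIsometryEquiv.map_eq_zero_iff] at h
    have hfa : AnalyticOnNhd ℝ (fderiv ℝ (epPF w.1)) Set.univ := (epPF_analytic w.1).fderiv
    have hev : fderiv ℝ (epPF w.1) =ᶠ[nhds z₀] 0 := by
      filter_upwards [hPopen.mem_nhds hz₀] with x hx using hfder0P x hx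
    have hfall : ∀ x, fderiv ℝ (epPF w.1) x = 0 := fun x =>
      hfa.eqOn_zero_of_preconnected_of_eventuallyEq_zero isPreconnected_univ
        (Set.mem_univ z₀) hev (Set.mem_univ x)
    have hconst : ∀ x, epPF w.1 x = epPF w.1 z₀ := fun x =>
      is_const_of_fderiv_eq_zero (epPF_diff w.1) hfall x z₀
    have hBval : B w.1 = (volume P).toReal * epPF w.1 z₀ := by
      have h : epPF w.1 = fun _ => epPF w.1 z₀ := funext hconst
      simp only [hBdef]
      rw [h, setIntegral_const, smul_eq_mul]; rfl
    have hz0 : epPF w.1 z₀ = 0 := by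
      rw [hBval] at hBzero
      exact (mul_eq_zero.mp hBzero).resolve_left hvolpos.ne'
    have hpol : w.1 = 0 := epPF_zero_poly fun x => (hconst x).trans hz0
    exact Subtype.ext hpol
  -- bijectivity via finite dimension
  have hΦbij : Function.Bijective Φ :=
    ⟨hΦinj, (LinearMap.injective_iff_surjective_of_finrank_eq_finrank
      (Subspace.dual_finrank_eq).symm).mp hΦinj⟩
  obtain ⟨w, hwsol, hwuniq⟩ := hΦbij.existsUnique L₀
  -- splitting the conditions
  have hsplit : ∀ p q : MvPolynomial (Fin 3) ℝ,
      (∫ x in P, ⟪gradient (fun y => v y - epPF p y) x, gradient (epPF q) x⟫)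
        = Av q - A p q := by
    intro p q
    have h1 : (fun x => ⟪gradient (fun y => v y - epPF p y) x, gradient (epPF q) x⟫)
        = fun x => ⟪gradient v x, gradient (epPF q) x⟫
            - ⟪gradient (epPF p) x, gradient (epPF q) x⟫ := by
      funext x
      rw [gradient_fun_sub (hvdiff x) (epPF_diff p x), inner_sub_left]
    rw [h1, integral_sub (hintAv q) (hintAA p q)]
  have hsplit2 : ∀ p : MvPolynomial (Fin 3) ℝ,
      (∫ x in P, (v x - epPF p x)) = Bv - B p := fun p =>
    integral_sub hintv (hintB p)
  -- the constant polynomial 1 in W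
  have h1W : (1 : MvPolynomial (Fin 3) ℝ) ∈ W := by
    rw [memW, MvPolynomial.totalDegree_one]
    exact Nat.zero_le k
  have hA1 : ∀ p : MvPolynomial (Fin 3) ℝ, A p 1 = 0 := by
    intro p
    have h : (fun x => ⟪gradient (epPF p) x, gradient (epPF (1 : MvPolynomial (Fin 3) ℝ)) x⟫)
        = fun _ => (0 : ℝ) := by
      funext x; rw [epPF_grad_one, inner_zero_right]
    simp only [hAdef]
    rw [h, integral_zero]
  have hAv1 : Av 1 = 0 := by
    have h : (fun x => ⟪gradient v x, gradient (epPF (1 : MvPolynomial (Fin 3) ℝ)) x⟫)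
        = fun _ => (0 : ℝ) := by
      funext x; rw [epPF_grad_one, inner_zero_right]
    simp only [hAvdef]
    rw [h, integral_zero]
  have hB1 : B 1 = (volume P).toReal := by
    simp only [hBdef]
    rw [epPF_one, setIntegral_const, smul_eq_mul, mul_one]; rfl
  -- equivalence of the two formulations
  have hcond : ∀ (p : MvPolynomial (Fin 3) ℝ) (hp : p ∈ W),
      ((∀ q : MvPolynomial (Fin 3) ℝ, q.totalDegree ≤ k →
          (∫ x in P, ⟪gradient (fun y => v y - epPF p y) x, gradient (epPF q) x⟫) = 0) ∧
        (∫ x in P, (v x - epPF p x)) = 0)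
      ↔ Φ ⟨p, hp⟩ = L₀ := by
    intro p hp
    constructor
    · rintro ⟨h1, h2⟩
      have hB : B p = Bv := by
        have := hsplit2 p
        rw [h2] at this
        linarith
      apply LinearMap.ext
      intro q
      have hdq : q.1.totalDegree ≤ k := (memW q.1).mp q.2
      have hA : A p q.1 = Av q.1 := by
        have := hsplit p q.1
        rw [h1 q.1 hdq] at this
        linarith
      rw [Φ_apply, L₀_apply, hA, hB]
    · intro hΦ
      have happ : ∀ q : W, A p q.1 + B p * B q.1 = Av q.1 + Bv * B q.1 := by
        intro q
        have := congrArg (fun L : Module.Dual ℝ W => L q) hΦ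
        simpa [Φ_apply, L₀_apply] using this
      have hB : B p = Bv := by
        have h := happ ⟨1, h1W⟩
        simp only [hA1, hAv1, hB1, zero_add] at h
        exact mul_right_cancel₀ hvolpos.ne' h
      have hA : ∀ q : MvPolynomial (Fin 3) ℝ, q.totalDegree ≤ k → A p q = Av q := by
        intro q hq
        have h := happ ⟨q, (memW q).mpr hq⟩
        rw [hB] at h
        simpa using h
      constructor
      · intro q hq
        rw [hsplit p q, hA q hq, sub_self]
      · rw [hsplit2 p, hB, sub_self]
  -- assemble
  have hwdeg : (w.1 : MvPolynomial (Fin 3) ℝ).totalDegree ≤ k := (memW w.1).mp w.2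
  refine ⟨w.1, ⟨hwdeg, ?_⟩, ?_⟩
  · have h := (hcond w.1 w.2).mpr (by simpa using hwsol)
    exact h
  · rintro p' ⟨hdeg', h1', h2'⟩
    have hp'W : p' ∈ W := (memW p').mpr hdeg'
    have hΦp' : Φ ⟨p', hp'W⟩ = L₀ := (hcond p' hp'W).mp ⟨h1', h2'⟩
    have := hwuniq ⟨p', hp'W⟩ hΦp'
    exact congrArg Subtype.val this
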